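/- Let X ∈ ℝ^{n×n} and p ∈ ℝⁿ with (X, p) controllable, and let φ(s) = det(sI − X) be the characteristic polynomial of X. Let Y ∈ ℝ^{m×m} and q ∈ ℝᵐ satisfy φ(Y)q = 0 (φ evaluated at the matrix Y, applied to q). Then there exists a matrix T ∈ ℝ^{m×n} such that TX = YT and Tp = q. -/

import Mathlib

open Matrix

/-- A pair `(X, p)` is controllable if `p, Xp, …, X^{n−1}p` span the whole space. -/
def Controllable {n : ℕ} (X : Matrix (Fin n) (Fin n) ℝ) (p : Fin n → ℝ) : Prop :=
  Submodule.span ℝ (Set.range fun i : Fin n => (X ^ (i : ℕ)) *ᵥ p) = ⊤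

lemma sum_mulVec_aux {ι m' n' : Type*} [Fintype n'] (s : Finset ι)
    (A : ι → Matrix m' n' ℝ) (v : n' → ℝ) :
    (∑ i ∈ s, A i) *ᵥ v = ∑ i ∈ s, A i *ᵥ v :=
  map_sum (Matrix.mulVec.addMonoidHomLeft v) A s

/-- If `(X, p)` is controllable with characteristic polynomial `φ`, and `φ(Y)q = 0`,
then there exists `T` with `TX = YT` and `Tp = q`. -/
theorem exists_intertwiner {n m : ℕ}
    (X : Matrix (Fin n) (Fin n) ℝ) (p : Fin n → ℝ) (hctrb : Controllable X p)
    (Y : Matrix (Fin m) (Fin m) ℝ) (q : Fin m → ℝ)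
    (hq : (Polynomial.aeval Y X.charpoly) *ᵥ q = 0) :
    ∃ T : Matrix (Fin m) (Fin n) ℝ, T * X = Y * T ∧ T *ᵥ p = q := by
  classical
  set c := X.charpoly with hc
  have hdeg : c.natDegree = n := by rw [hc, X.charpoly_natDegree_eq_dim, Fintype.card_fin]
  have hmon : c.Monic := X.charpoly_monic
  have hcn : c.coeff n = 1 := by
    have := hmon.leadingCoeff
    rwa [Polynomial.leadingCoeff, hdeg] at this
  -- expansion of the Cayley–Hamilton relation for X
  have hXn : X ^ n = -∑ i ∈ Finset.range n, c.coeff i • X ^ i := by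
    have h0 : (Polynomial.aeval X) c = 0 := X.aeval_self_charpoly
    rw [Polynomial.aeval_eq_sum_range' (by omega : c.natDegree < n + 1),
      Finset.sum_range_succ, hcn, one_smul] at h0
    rw [add_comm] at h0
    exact eq_neg_of_add_eq_zero_left h0
  -- expansion of the hypothesis for Y
  have hYn : (Y ^ n) *ᵥ q = -∑ i ∈ Finset.range n, c.coeff i • ((Y ^ i) *ᵥ q) := by
    rw [Polynomial.aeval_eq_sum_range' (by omega : c.natDegree < n + 1),
      Finset.sum_range_succ, hcn, one_smul] at hq
    rw [add_mulVec, sum_mulVec_aux] at hq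
    have he : ∀ i ∈ Finset.range n, (c.coeff i • Y ^ i) *ᵥ q = c.coeff i • ((Y ^ i) *ᵥ q) :=
      fun i _ => smul_mulVec _ _ _
    rw [Finset.sum_congr rfl he, add_comm] at hq
    exact eq_neg_of_add_eq_zero_left hq
  -- the controllability basis
  have hspan : ⊤ ≤ Submodule.span ℝ (Set.range fun i : Fin n => (X ^ (i : ℕ)) *ᵥ p) :=
    hctrb.ge
  have hcard : Fintype.card (Fin n) = Module.finrank ℝ (Fin n → ℝ) := by simp
  let b : Module.Basis (Fin n) ℝ (Fin n → ℝ) :=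
    basisOfTopLeSpanOfCardEqFinrank (fun i : Fin n => (X ^ (i : ℕ)) *ᵥ p) hspan hcard
  have hb : ∀ i : Fin n, b i = (X ^ (i : ℕ)) *ᵥ p := fun i => by
    simp [b, coe_basisOfTopLeSpanOfCardEqFinrank]
  let f : (Fin n → ℝ) →ₗ[ℝ] (Fin m → ℝ) := b.constr ℝ (fun i : Fin n => (Y ^ (i : ℕ)) *ᵥ q)
  have hfb : ∀ i : Fin n, f (b i) = (Y ^ (i : ℕ)) *ᵥ q := fun i =>
    Module.Basis.constr_basis b ℝ _ i
  -- key claim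
  have key : ∀ k : ℕ, f ((X ^ k) *ᵥ p) = (Y ^ k) *ᵥ q := by
    intro k
    induction k using Nat.strong_induction_on with
    | _ k ih =>
      by_cases hk : k < n
      · have := hfb ⟨k, hk⟩
        rwa [hb ⟨k, hk⟩] at this
      · obtain ⟨j, rfl⟩ : ∃ j, k = j + n := ⟨k - n, by omega⟩
        have hXpow : X ^ (j + n) = ∑ i ∈ Finset.range n, (-(c.coeff i)) • X ^ (j + i) := by
          rw [pow_add, hXn, mul_neg, Finset.mul_sum, ← Finset.sum_neg_distrib]
          refine Finset.sum_congr rfl fun i _ => ?_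
          rw [mul_smul_comm, ← pow_add, neg_smul]
        have hXk : (X ^ (j + n)) *ᵥ p
            = ∑ i ∈ Finset.range n, (-(c.coeff i)) • ((X ^ (j + i)) *ᵥ p) := by
          rw [hXpow, sum_mulVec_aux]
          exact Finset.sum_congr rfl fun i _ => smul_mulVec _ _ _
        have hYk : (Y ^ (j + n)) *ᵥ q
            = ∑ i ∈ Finset.range n, (-(c.coeff i)) • ((Y ^ (j + i)) *ᵥ q) := by
          have : (Y ^ (j + n)) *ᵥ q = (Y ^ j).mulVecLin ((Y ^ n) *ᵥ q) := by
            rw [mulVecLin_apply, mulVec_mulVec, ← pow_add, add_comm j n]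
          rw [this, hYn, map_neg, map_sum, ← Finset.sum_neg_distrib]
          refine Finset.sum_congr rfl fun i _ => ?_
          rw [_root_.map_smul, mulVecLin_apply, mulVec_mulVec, ← pow_add, add_comm j i, neg_smul,
            add_comm i j]
        rw [hXk, map_sum, hYk]
        refine Finset.sum_congr rfl fun i hi => ?_
        rw [_root_.map_smul, ih (j + i) (by have := Finset.mem_range.mp hi; omega)]
  -- construct T
  refine ⟨LinearMap.toMatrix' f, ?_, ?_⟩
  · apply Matrix.toLin'.injective
    rw [toLin'_mul, toLin'_mul]
    refine b.ext fun i => ?_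
    simp only [LinearMap.comp_apply, toLin'_apply, toLin'_toMatrix']
    rw [hb i, mulVec_mulVec, ← pow_succ', key (i + 1), key i, mulVec_mulVec, ← pow_succ']
  · have := key 0
    rw [pow_zero, one_mulVec] at this
    have h2 : (LinearMap.toMatrix' f) *ᵥ p = f p := by
      rw [← toLin'_apply, toLin'_toMatrix']
    rw [h2, this, pow_zero, one_mulVec]
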